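/- Suppose the leader is stopped at position p₂ and the follower has speed v₁(t) > 0 and gap e_p(t) = p₂ − p₁(t) − l_c. If e_p(t) ≥ s₀ + ρ v₁(t) + v₁(t)²/(2|u_min|), then the follower braking at maximal deceleration u_min < 0 (in continuous time) comes to rest without its gap falling below s₀. -/

import Mathlib

theorem stmt10 (p₁ p₂ lc v₁ ρ s₀ umin : ℝ) (hlc : 0 ≤ lc) (hρ : 0 ≤ ρ)
    (hs₀ : 0 < s₀) (humin : umin < 0) (hv : 0 < v₁)
    (hgap : p₂ - p₁ - lc ≥ s₀ + ρ * v₁ + v₁ ^ 2 / (2 * |umin|)) :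
    (v₁ + umin * (v₁ / |umin|) = 0) ∧
    ∀ σ : ℝ, σ ∈ Set.Icc 0 (v₁ / |umin|) →
      p₂ - (p₁ + v₁ * σ + (1 / 2) * umin * σ ^ 2) - lc ≥ s₀ := by
  have habs : |umin| = -umin := abs_of_neg humin
  have hne : -umin > 0 := by linarith
  rw [habs] at hgap ⊢
  constructor
  · field_simp [humin.ne]; ring
  · intro σ hσ
    obtain ⟨h0, h1⟩ := hσ
    have hρv : 0 ≤ ρ * v₁ := mul_nonneg hρ hv.le
    have hq : v₁ * σ + (1 / 2) * umin * σ ^ 2 ≤ v₁ ^ 2 / (2 * -umin) := by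
      rw [le_div_iff₀ (by linarith)]
      nlinarith [sq_nonneg (v₁ + umin * σ)]
    linarith
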